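/- arXiv:2004.12093 — 2 statements merged into one kernel-verified Lean document; each statement's English description precedes it below -/
import Mathlib

section
/- Let m, n be positive integers, let w ∈ B_{m,n}, and let j be such that the cyclic rotation rot^j(w) begins with the letter 0. Then rot^j(w) ∈ B_{m,n}. (In particular, the lexicographically smallest cyclic rotation of w belongs to B_{m,n}.) -/
/-- The `j`-th cyclic rotation of a word `w` of length `k`:
`(rot j w)ᵢ = w_{i+j mod k}` (0-indexed), so `rot 1` sends `w₁w₂⋯w_k` to `w₂⋯w_k w₁`. -/
def rot {k : ℕ} (j : ℕ) (w : Fin k → Bool) : Fin k → Bool :=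
  fun i => w ⟨((i : ℕ) + j) % k, Nat.mod_lt _ i.pos⟩

/-- Membership in `B_{m,n}`: a 0/1 word of length `(m+1)n` which is `m`-balanced
(exactly `mn` ones and `n` zeros), starts with a zero, and has weight `≡ -1 (mod n)`. -/
def memB (m n : ℕ) (w : Fin ((m + 1) * n) → Bool) : Prop :=
  (Finset.univ.filter fun i => w i = true).card = m * n ∧
  (Finset.univ.filter fun i => w i = false).card = n ∧
  (∀ i : Fin ((m + 1) * n), (i : ℕ) = 0 → w i = false) ∧
  (((∑ i : Fin ((m + 1) * n), if w i = true then (i : ℕ) + 1 else 0 : ℕ) : ZMod n) = -1)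

/-- If `w ∈ B_{m,n}` and the cyclic rotation `rotʲ(w)` begins with the letter `0`,
then `rotʲ(w) ∈ B_{m,n}`. -/
theorem rot_mem_B (m n : ℕ) (hm : 0 < m) (hn : 0 < n)
    (w : Fin ((m + 1) * n) → Bool) (hw : memB m n w) (j : ℕ)
    (h0 : ∀ i : Fin ((m + 1) * n), (i : ℕ) = 0 → rot j w i = false) :
    memB m n (rot j w) := by
  obtain ⟨h1, h2, h3, h4⟩ := hw
  have hk : 0 < (m + 1) * n := Nat.mul_pos (Nat.succ_pos m) hn
  haveI : NeZero ((m + 1) * n) := ⟨hk.ne'⟩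
  have hndvd : n ∣ (m + 1) * n := dvd_mul_left n (m + 1)
  open Fin.NatCast in set c : Fin ((m + 1) * n) := (j : Fin ((m + 1) * n)) with hc
  have hrot : ∀ i : Fin ((m + 1) * n), rot j w i = w (i + c) := by
    intro i
    show w _ = w _
    congr 1
    ext
    simp [hc, Fin.add_def, Fin.val_natCast, Nat.add_mod]
  have hk0 : (((m + 1) * n : ℕ) : ZMod n) = 0 :=
    (ZMod.natCast_eq_zero_iff _ n).mpr hndvd
  have hmodk : ∀ x : ℕ, ((x % ((m + 1) * n) : ℕ) : ZMod n) = (x : ZMod n) := by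
    intro x
    conv_rhs => rw [← Nat.mod_add_div x ((m + 1) * n)]
    rw [Nat.cast_add, Nat.cast_mul, hk0, zero_mul, add_zero]
  have hval : ∀ i : Fin ((m + 1) * n),
      (((i + c : Fin ((m + 1) * n)) : ℕ) : ZMod n) = ((i : ℕ) : ZMod n) + (j : ZMod n) := by
    intro i
    have h : ((i + c : Fin ((m + 1) * n)) : ℕ) = ((i : ℕ) + (c : ℕ)) % ((m + 1) * n) :=
      Fin.val_add _ _
    rw [h, hmodk]
    push_cast
    rw [hc, Fin.val_natCast, hmodk]
  have hcard : ∀ b : Bool, (Finset.univ.filter fun i : Fin ((m + 1) * n) => rot j w i = b).card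
      = (Finset.univ.filter fun i => w i = b).card := by
    intro b
    apply Finset.card_bij (fun a _ => a + c)
    · intro a ha
      simp only [Finset.mem_filter, Finset.mem_univ, true_and] at ha ⊢
      rwa [hrot] at ha
    · intro a _ a' _ h
      exact add_right_cancel h
    · intro b' hb'
      simp only [Finset.mem_filter, Finset.mem_univ, true_and] at hb'
      refine ⟨b' - c, ?_, by simp⟩
      simp only [Finset.mem_filter, Finset.mem_univ, true_and]
      rw [hrot, sub_add_cancel]
      exact hb'
  refine ⟨(hcard true).trans h1, (hcard false).trans h2, h0, ?_⟩
  -- weight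
  push_cast
  have step : ∀ i : Fin ((m + 1) * n), (if rot j w i = true then ((i : ℕ) : ZMod n) + 1 else 0)
      = (if w (i + c) = true then (((i + c : Fin ((m + 1) * n)) : ℕ) : ZMod n) + 1 else 0)
        - (if w (i + c) = true then (j : ZMod n) else 0) := by
    intro i
    rw [hrot i]
    by_cases h : w (i + c) = true <;> simp [h, hval i] <;> ring
  rw [Finset.sum_congr rfl (fun i _ => step i), Finset.sum_sub_distrib]
  have hA : (∑ i : Fin ((m + 1) * n),
      if w (i + c) = true then (((i + c : Fin ((m + 1) * n)) : ℕ) : ZMod n) + 1 else 0)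
      = ∑ i : Fin ((m + 1) * n), if w i = true then ((i : ℕ) : ZMod n) + 1 else 0 :=
    Fintype.sum_equiv (Equiv.addRight c) _ _ (fun i => rfl)
  have hB : (∑ i : Fin ((m + 1) * n), if w (i + c) = true then (j : ZMod n) else 0)
      = ∑ i : Fin ((m + 1) * n), if w i = true then (j : ZMod n) else 0 :=
    Fintype.sum_equiv (Equiv.addRight c) _ _ (fun i => rfl)
  rw [hA, hB]
  have hsum1 : (∑ i : Fin ((m + 1) * n), if w i = true then ((i : ℕ) : ZMod n) + 1 else 0) = -1 := by
    rw [← h4]; push_cast; rfl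
  have hsum2 : (∑ i : Fin ((m + 1) * n), (if w i = true then (j : ZMod n) else 0)) = 0 := by
    rw [← Finset.sum_filter, Finset.sum_const, h1, nsmul_eq_mul]
    rw [Nat.cast_mul, ZMod.natCast_self, mul_zero, zero_mul]
  rw [hsum1, hsum2]; ring
end

section
/- Let m, n be positive integers and let B^L_{m,n} denote the set of Lyndon words in B_{m,n}. Then n · |B^L_{m,n}| = |B_{m,n}|. -/
/-- Strict lexicographic order on 0/1 words (with `false < true`). -/
def lexLt {k : ℕ} (v w : Fin k → Bool) : Prop :=
  ∃ i : Fin k, (∀ i' : Fin k, i' < i → v i' = w i') ∧ v i < w i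

/-- A word of length `k` is Lyndon if it is strictly lexicographically smaller than all
of its proper cyclic rotations. -/
def isLyndon {k : ℕ} (w : Fin k → Bool) : Prop :=
  ∀ j : ℕ, 1 ≤ j → j ≤ k - 1 → lexLt w (rot j w)

theorem rot_rot {k : ℕ} (a b : ℕ) (w : Fin k → Bool) : rot a (rot b w) = rot (a + b) w := by
  funext i
  simp only [rot]
  congr 1
  ext
  simp only [Nat.mod_add_mod, Nat.add_assoc]

theorem rot_zero {k : ℕ} (w : Fin k → Bool) : rot 0 w = w := by
  funext i; simp [rot, Nat.mod_eq_of_lt i.isLt]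

theorem rot_mod {k : ℕ} (j : ℕ) (w : Fin k → Bool) : rot (j % k) w = rot j w := by
  funext i; simp only [rot]; congr 2; exact Nat.add_mod_mod _ _ _

theorem rot_self {k : ℕ} (w : Fin k → Bool) : rot k w = w := by
  rcases Nat.eq_zero_or_pos k with h | h
  · funext i; exact absurd i.isLt (by omega)
  · rw [← rot_mod, Nat.mod_self, rot_zero]

theorem rot_mul {k : ℕ} (d : ℕ) (w : Fin k → Bool) (h : rot d w = w) (t : ℕ) :
    rot (t * d) w = w := by
  induction t with
  | zero => simpa using rot_zero w
  | succ t ih => rw [Nat.succ_mul, ← rot_rot, h, ih]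

theorem rot_gcd {k : ℕ} (hk : 0 < k) (d : ℕ) (w : Fin k → Bool) (h : rot d w = w) :
    rot (Nat.gcd d k) w = w := by
  set A : ℤ := Nat.gcdA d k with hA
  set t : ℕ := (A % k).toNat with ht
  have hkz : (0:ℤ) < (k:ℤ) := by exact_mod_cast hk
  have htA : (t : ℤ) ≡ A [ZMOD k] := by
    have h1 : (t : ℤ) = A % k := Int.toNat_of_nonneg (Int.emod_nonneg A (by omega))
    show (t : ℤ) % k = A % k
    rw [h1, Int.emod_emod_of_dvd A dvd_rfl]
  have hbezout : (Nat.gcd d k : ℤ) = d * A + k * Nat.gcdB d k := Nat.gcd_eq_gcd_ab d k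
  have h2 : ((t * d : ℕ) : ℤ) ≡ ((Nat.gcd d k : ℕ) : ℤ) [ZMOD k] := by
    push_cast
    calc (t : ℤ) * d ≡ A * d [ZMOD k] := htA.mul_right d
      _ ≡ (Nat.gcd d k : ℤ) [ZMOD k] := by
          rw [Int.modEq_iff_dvd]
          exact ⟨Nat.gcdB d k, by linarith [hbezout]⟩
  have h3 : (t * d) % k = Nat.gcd d k % k := by
    have := h2
    unfold Int.ModEq at this
    rw [← Int.natCast_mod, ← Int.natCast_mod] at this
    exact_mod_cast this
  rw [← rot_mod, ← h3, rot_mod]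
  exact rot_mul d w h t

noncomputable def rotPerm (k : ℕ) (j : ℕ) : Fin k ≃ Fin k :=
  Equiv.ofBijective (fun i => ⟨((i : ℕ) + j) % k, Nat.mod_lt _ i.pos⟩)
    (Finite.injective_iff_bijective.mp (by
      intro i i' h
      have h2 : ((i : ℕ) + j) % k = ((i' : ℕ) + j) % k := congrArg Fin.val h
      exact Fin.ext ((Nat.ModEq.add_right_cancel' j h2).eq_of_lt_of_lt i.isLt i'.isLt)))
theorem rot_apply_perm {k : ℕ} (j : ℕ) (w : Fin k → Bool) (i : Fin k) :
    rot j w i = w (rotPerm k j i) := rfl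
theorem rotPerm_symm_spec {k : ℕ} (j : ℕ) (i : Fin k) :
    (((rotPerm k j).symm i : ℕ) + j) % k = (i : ℕ) :=
  congrArg Fin.val ((rotPerm k j).apply_symm_apply i)

theorem card_filter_rot {k : ℕ} (j : ℕ) (w : Fin k → Bool) (b : Bool) :
    (Finset.univ.filter fun i => rot j w i = b).card
      = (Finset.univ.filter fun i => w i = b).card := by
  apply Finset.card_bij' (fun i _ => rotPerm k j i) (fun i _ => (rotPerm k j).symm i)
  · intro a ha
    simp only [Finset.mem_filter, Finset.mem_univ, true_and] at ha ⊢
    rw [rot_apply_perm] at ha; exact ha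
  · intro a ha
    simp only [Finset.mem_filter, Finset.mem_univ, true_and] at ha ⊢
    rw [rot_apply_perm, Equiv.apply_symm_apply]; exact ha
  · intro a _; exact Equiv.symm_apply_apply _ _
  · intro a _; exact Equiv.apply_symm_apply _ _

theorem cast_mod_zmod {n N : ℕ} (hd : n ∣ N) (x : ℕ) : ((x % N : ℕ) : ZMod n) = (x : ZMod n) := by
  conv_rhs => rw [← Nat.mod_add_div x N]
  push_cast
  obtain ⟨t, rfl⟩ := hd
  push_cast
  simp [ZMod.natCast_self]

theorem wt_rot {n k : ℕ} (hd : n ∣ k) (j : ℕ) (w : Fin k → Bool) :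
    (∑ i : Fin k, if w i = true then ((i : ℕ) : ZMod n) + 1 else 0)
      = (∑ i : Fin k, if rot j w i = true then ((i : ℕ) : ZMod n) + 1 else 0)
        + (j : ZMod n) * ((Finset.univ.filter fun i => w i = true).card : ZMod n) := by
  have key : (∑ i : Fin k, if rot j w i = true then ((i : ℕ) : ZMod n) + 1 else 0)
      = ∑ i : Fin k, if w i = true then (((rotPerm k j).symm i : ℕ) : ZMod n) + 1 else 0 := by
    apply Fintype.sum_equiv (rotPerm k j)
    intro i
    rw [rot_apply_perm, Equiv.symm_apply_apply]
  rw [key]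
  have hsymm : ∀ i : Fin k, (((rotPerm k j).symm i : ℕ) : ZMod n) = (i : ZMod n) - (j : ZMod n) := by
    intro i
    have := rotPerm_symm_spec j i
    have h2 : ((((((rotPerm k j).symm i : Fin k) : ℕ) + j) % k : ℕ) : ZMod n) = ((i : ℕ) : ZMod n) := by
      rw [this]
    rw [cast_mod_zmod hd] at h2
    push_cast at h2
    linear_combination h2
  have hcard : (∑ i : Fin k, if w i = true then (1 : ZMod n) else 0)
      = ((Finset.univ.filter fun i => w i = true).card : ZMod n) := by
    rw [Finset.sum_boole]
  calc (∑ i : Fin k, if w i = true then ((i : ℕ) : ZMod n) + 1 else 0)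
      = ∑ i : Fin k, ((if w i = true then (((rotPerm k j).symm i : ℕ) : ZMod n) + 1 else 0)
          + (j : ZMod n) * (if w i = true then (1 : ZMod n) else 0)) := by
        apply Finset.sum_congr rfl
        intro i _
        by_cases h : w i = true <;> simp [h, hsymm i] <;> ring
    _ = _ := by rw [Finset.sum_add_distrib, ← Finset.mul_sum, hcard]
/-- decomposition of a sum over `range (g*r)` into blocks -/
theorem sum_range_mul_blocks {M : Type*} [AddCommMonoid M] (g r : ℕ) (h : ℕ → M) :
    ∑ x ∈ Finset.range (g * r), h x
      = ∑ t ∈ Finset.range r, ∑ u ∈ Finset.range g, h (g * t + u) := by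
  induction r with
  | zero => simp
  | succ r ih =>
    rw [Nat.mul_succ, Finset.sum_range_add, ih, Finset.sum_range_succ]

theorem fin_sum_to_range {M : Type*} [AddCommMonoid M] {N : ℕ} (hN : 0 < N)
    (w : Fin N → Bool) (F : Bool → ℕ → M) :
    (∑ i : Fin N, F (w i) (i : ℕ))
      = ∑ x ∈ Finset.range N, F (w ⟨x % N, Nat.mod_lt _ hN⟩) x := by
  rw [← Fin.sum_univ_eq_sum_range (fun x => F (w ⟨x % N, Nat.mod_lt x hN⟩) x) N]
  apply Finset.sum_congr rfl
  intro i _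
  have h : (⟨(i : ℕ) % N, Nat.mod_lt _ hN⟩ : Fin N) = i := Fin.ext (Nat.mod_eq_of_lt i.isLt)
  rw [h]

theorem aperiodic_aux {N : ℕ} (m n : ℕ) (hm : 0 < m) (hn : 0 < n) (hN : N = (m + 1) * n)
    (w : Fin N → Bool)
    (h1 : (Finset.univ.filter fun i => w i = true).card = m * n)
    (h2 : (Finset.univ.filter fun i => w i = false).card = n)
    (h4 : (((∑ i : Fin N, if w i = true then (i : ℕ) + 1 else 0 : ℕ) : ZMod n) = -1))
    (d : ℕ) (hrot : rot d w = w) : d % N = 0 := by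
  have hNpos : 0 < N := by rw [hN]; positivity
  set g := Nat.gcd d N with hg
  have hgN : g ∣ N := Nat.gcd_dvd_right d N
  have hgpos : 0 < g := Nat.gcd_pos_of_pos_right d hNpos
  set r := N / g with hr
  have hNgr : g * r = N := Nat.mul_div_cancel' hgN
  have hrpos : 0 < r := Nat.div_pos (Nat.le_of_dvd hNpos hgN) hgpos
  have hfix : rot g w = w := rot_gcd hNpos d w hrot
  -- the periodic extension
  set v : ℕ → Bool := fun x => w ⟨x % N, Nat.mod_lt _ hNpos⟩ with hv
  have hvlt : ∀ x (hx : x < N), v x = w ⟨x, hx⟩ := by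
    intro x hx; simp only [hv]; congr 1; exact Fin.ext (Nat.mod_eq_of_lt hx)
  have hstep : ∀ x, v (x + g) = v x := by
    intro x
    have := congrFun hfix ⟨x % N, Nat.mod_lt _ hNpos⟩
    simp only [rot] at this
    simp only [hv]
    rw [← this]
    congr 1
    exact Fin.ext (by simp [Nat.mod_add_mod, Nat.add_mod_right, Nat.add_mod])
  have hmulstep : ∀ t x, v (x + g * t) = v x := by
    intro t
    induction t with
    | zero => simp
    | succ t ih =>
      intro x
      rw [Nat.mul_succ, ← Nat.add_assoc, hstep, ih]
  have hperiod : ∀ x, v x = v (x % g) := by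
    intro x
    conv_lhs => rw [← Nat.mod_add_div x g]
    exact hmulstep (x / g) (x % g)
  -- convert counts and weight to range sums over v
  have hones : (m * n) = ∑ x ∈ Finset.range N, (if v x = true then 1 else 0) := by
    rw [← h1, Finset.card_filter]
    exact fin_sum_to_range hNpos w (fun b _ => if b = true then 1 else 0)
  have hzeros : n = ∑ x ∈ Finset.range N, (if v x = false then 1 else 0) := by
    rw [← h2, Finset.card_filter]
    exact fin_sum_to_range hNpos w (fun b _ => if b = false then 1 else 0)
  set W : ℕ := (∑ i : Fin N, if w i = true then (i : ℕ) + 1 else 0) with hW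
  have hWsum : W = ∑ x ∈ Finset.range N, (if v x = true then x + 1 else 0) := by
    rw [hW]
    exact fin_sum_to_range hNpos w (fun b x => if b = true then x + 1 else 0)
  -- block quantities
  set z0 : ℕ := ∑ u ∈ Finset.range g, (if v u = false then 1 else 0) with hz0
  set o0 : ℕ := ∑ u ∈ Finset.range g, (if v u = true then 1 else 0) with ho0
  set Wb : ℕ := ∑ u ∈ Finset.range g, (if v u = true then u + 1 else 0) with hWb
  have hvblock : ∀ t u, u < g → v (g * t + u) = v u := by
    intro t u hu
    rw [Nat.add_comm, hmulstep t u]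
  have hzeros' : n = r * z0 := by
    rw [hzeros, ← hNgr, sum_range_mul_blocks]
    rw [Finset.sum_congr rfl fun t _ => Finset.sum_congr rfl fun u hu => by
      rw [hvblock t u (Finset.mem_range.mp hu)]]
    rw [Finset.sum_const, smul_eq_mul, Finset.card_range]
  have hones' : m * n = r * o0 := by
    rw [hones, ← hNgr, sum_range_mul_blocks]
    rw [Finset.sum_congr rfl fun t _ => Finset.sum_congr rfl fun u hu => by
      rw [hvblock t u (Finset.mem_range.mp hu)]]
    rw [Finset.sum_const, smul_eq_mul, Finset.card_range]
  set S : ℕ := ∑ t ∈ Finset.range r, t with hS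
  have hWdecomp : W = r * Wb + g * o0 * S := by
    rw [hWsum, ← hNgr, sum_range_mul_blocks]
    have inner : ∀ t, (∑ u ∈ Finset.range g, if v (g * t + u) = true then (g * t + u) + 1 else 0)
        = Wb + g * t * o0 := by
      intro t
      rw [hWb, ho0, Finset.mul_sum, ← Finset.sum_add_distrib]
      apply Finset.sum_congr rfl
      intro u hu
      rw [hvblock t u (Finset.mem_range.mp hu)]
      by_cases h : v u = true <;> simp [h] <;> ring
    rw [Finset.sum_congr rfl fun t _ => inner t]
    rw [Finset.sum_add_distrib, Finset.sum_const, smul_eq_mul, Finset.card_range]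
    rw [show (∑ t ∈ Finset.range r, g * t * o0) = g * o0 * S by
      rw [hS, Finset.mul_sum]; exact Finset.sum_congr rfl fun t _ => by ring]
  -- structural identities
  have hggr : g = (m + 1) * z0 := by
    have h5 : r * ((m + 1) * z0) = r * g := by
      calc r * ((m + 1) * z0) = (m + 1) * (r * z0) := by ring
        _ = (m + 1) * n := by rw [← hzeros']
        _ = N := hN.symm
        _ = g * r := hNgr.symm
        _ = r * g := by ring
    exact (Nat.eq_of_mul_eq_mul_left hrpos h5).symm
  have hoo : o0 = m * z0 := by
    have h5 : r * (m * z0) = r * o0 := by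
      calc r * (m * z0) = m * (r * z0) := by ring
        _ = m * n := by rw [← hzeros']
        _ = r * o0 := hones'
    exact (Nat.eq_of_mul_eq_mul_left hrpos h5).symm
  -- n divides g * o0 * S
  obtain ⟨c, hc⟩ : ∃ c, m * (m + 1) = 2 * c := (Nat.even_mul_succ_self m).exists_two_nsmul _
  have hdvd : n ∣ g * o0 * S := by
    refine ⟨c * z0 * (r - 1), ?_⟩
    have h2S : S * 2 = r * (r - 1) := by rw [hS]; exact Finset.sum_range_id_mul_two r
    have : 2 * (g * o0 * S) = 2 * (n * (c * z0 * (r - 1))) := by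
      calc 2 * (g * o0 * S) = g * o0 * (S * 2) := by ring
        _ = ((m + 1) * z0) * (m * z0) * (r * (r - 1)) := by rw [hggr, hoo, h2S]
        _ = (m * (m + 1)) * (z0 * z0 * (r * (r - 1))) := by ring
        _ = (2 * c) * (z0 * z0 * (r * (r - 1))) := by rw [hc]
        _ = 2 * ((r * z0) * (c * z0 * (r - 1))) := by ring
        _ = 2 * (n * (c * z0 * (r - 1))) := by rw [← hzeros']
    omega
  -- pass to ZMod r
  have hrn : r ∣ n := ⟨z0, hzeros'⟩
  have hWr0 : ((W : ℕ) : ZMod r) = 0 := by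
    rw [hWdecomp]
    push_cast
    rw [ZMod.natCast_self]
    have : ((g * o0 * S : ℕ) : ZMod r) = 0 := by
      rw [ZMod.natCast_eq_zero_iff]
      exact dvd_trans hrn hdvd
    push_cast at this
    rw [this]
    ring
  have hWrm1 : ((W : ℕ) : ZMod r) = -1 := by
    have := congrArg (ZMod.castHom hrn (ZMod r)) h4
    rw [map_natCast, map_neg, map_one] at this
    exact this
  have h10 : (1 : ZMod r) = 0 := by
    have := hWr0.symm.trans hWrm1
    linear_combination this
  have hr1 : r = 1 := by
    have : ((1 : ℕ) : ZMod r) = 0 := by exact_mod_cast h10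
    rw [ZMod.natCast_eq_zero_iff] at this
    exact Nat.eq_one_of_dvd_one this
  -- conclude
  have : g = N := by
    have := hNgr
    rw [hr1, Nat.mul_one] at this
    exact this
  have hNd : N ∣ d := this ▸ Nat.gcd_dvd_left d N
  obtain ⟨e, rfl⟩ := hNd
  exact Nat.mul_mod_right N e
instance finWFLT (N : ℕ) : WellFoundedLT (Fin N) := Finite.to_wellFoundedLT

theorem lexLt_iff {k : ℕ} (v w : Fin k → Bool) : lexLt v w ↔ toLex v < toLex w := Iff.rfl

theorem wt_cast {n k : ℕ} (w : Fin k → Bool) :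
    (((∑ i : Fin k, if w i = true then (i : ℕ) + 1 else 0 : ℕ)) : ZMod n)
      = ∑ i : Fin k, if w i = true then ((i : ℕ) : ZMod n) + 1 else 0 := by
  rw [Nat.cast_sum]
  apply Finset.sum_congr rfl
  intro i _
  by_cases h : w i = true <;> simp [h]

/-- rotation preserves the rotation-invariant parts of memB -/
theorem memB_rot_inv (m n : ℕ) (hn : 0 < n) {w : Fin ((m + 1) * n) → Bool}
    (h1 : (Finset.univ.filter fun i => w i = true).card = m * n)
    (h2 : (Finset.univ.filter fun i => w i = false).card = n)
    (h4 : (((∑ i : Fin ((m + 1) * n), if w i = true then (i : ℕ) + 1 else 0 : ℕ) : ZMod n) = -1))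
    (j : ℕ) :
    (Finset.univ.filter fun i => rot j w i = true).card = m * n ∧
    (Finset.univ.filter fun i => rot j w i = false).card = n ∧
    (((∑ i : Fin ((m + 1) * n), if rot j w i = true then (i : ℕ) + 1 else 0 : ℕ) : ZMod n) = -1) := by
  refine ⟨(card_filter_rot j w true).trans h1, (card_filter_rot j w false).trans h2, ?_⟩
  have hd : n ∣ (m + 1) * n := dvd_mul_left n (m + 1)
  have := wt_rot hd j w
  rw [wt_cast]
  rw [wt_cast] at h4
  rw [h1] at this
  have hz : ((m * n : ℕ) : ZMod n) = 0 := by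
    rw [Nat.cast_mul, ZMod.natCast_self, mul_zero]
  rw [hz, mul_zero, add_zero] at this
  rw [← this, h4]

/-- every word satisfying the invariant conditions has a Lyndon rotation which is
lexicographically minimal among all rotations -/
theorem exists_lyndon_rot (m n : ℕ) (hm : 0 < m) (hn : 0 < n) (w : Fin ((m + 1) * n) → Bool)
    (h1 : (Finset.univ.filter fun i => w i = true).card = m * n)
    (h2 : (Finset.univ.filter fun i => w i = false).card = n)
    (h4 : (((∑ i : Fin ((m + 1) * n), if w i = true then (i : ℕ) + 1 else 0 : ℕ) : ZMod n) = -1)) :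
    ∃ j0, isLyndon (rot j0 w) ∧ ∀ j : ℕ, toLex (rot j0 w) ≤ toLex (rot j w) := by
  have hNpos : 0 < (m + 1) * n := by positivity
  classical
  let s : Finset (Lex (Fin ((m + 1) * n) → Bool)) :=
    (Finset.range ((m + 1) * n)).image (fun j => toLex (rot j w))
  have hsne : s.Nonempty := ⟨toLex (rot 0 w), Finset.mem_image.mpr ⟨0, Finset.mem_range.mpr hNpos, rfl⟩⟩
  obtain ⟨j0, hj0mem, hj0⟩ := Finset.mem_image.mp (s.min'_mem hsne)
  have hmin : ∀ j : ℕ, toLex (rot j0 w) ≤ toLex (rot j w) := by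
    intro j
    rw [hj0]
    apply Finset.min'_le
    rw [← rot_mod]
    exact Finset.mem_image.mpr ⟨j % ((m + 1) * n), Finset.mem_range.mpr (Nat.mod_lt _ hNpos), rfl⟩
  refine ⟨j0, ?_, hmin⟩
  intro j hj1 hjN
  obtain ⟨c1, c2, c4⟩ := memB_rot_inv m n hn h1 h2 h4 j0
  rw [lexLt_iff]
  apply lt_of_le_of_ne
  · rw [rot_rot]
    have := hmin (j + j0)
    exact this
  · intro heq
    have heq2 : rot j0 w = rot j (rot j0 w) := toLex.injective heq
    have := aperiodic_aux m n hm hn rfl (rot j0 w) c1 c2 c4 j heq2.symm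
    rw [Nat.mod_eq_of_lt (by omega : j < (m + 1) * n)] at this
    omega

theorem lyndon_unique (m n : ℕ) (hm : 0 < m) (hn : 0 < n) (w v : Fin ((m + 1) * n) → Bool)
    (hwL : isLyndon w) (hvL : isLyndon v) (j : ℕ) (h : v = rot j w) : v = w := by
  have hNpos : 0 < (m + 1) * n := by positivity
  set d := j % ((m + 1) * n) with hd
  have hdN : d < (m + 1) * n := Nat.mod_lt _ hNpos
  have hv : v = rot d w := by rw [h, hd, rot_mod]
  rcases Nat.eq_zero_or_pos d with h0 | h0
  · rw [hv, h0, rot_zero]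
  · exfalso
    have hlt1 : lexLt w (rot d w) := hwL d h0 (by omega)
    have hw : w = rot ((m + 1) * n - d) v := by
      rw [hv, rot_rot, show (m + 1) * n - d + d = (m + 1) * n by omega, rot_self]
    have hlt2 : lexLt v (rot ((m + 1) * n - d) v) := hvL ((m + 1) * n - d) (by omega) (by omega)
    rw [← hw] at hlt2
    rw [← hv] at hlt1
    rw [lexLt_iff] at hlt1 hlt2
    exact lt_asymm hlt1 hlt2
noncomputable def zpos {N : ℕ} (n : ℕ) (w : Fin N → Bool)
    (h : (Finset.univ.filter fun i => w i = false).card = n) (k : Fin n) : Fin N :=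
  ((Finset.orderIsoOfFin _ h k) : Fin N)

theorem zpos_false {N n : ℕ} {w : Fin N → Bool}
    (h : (Finset.univ.filter fun i => w i = false).card = n) (k : Fin n) :
    w (zpos n w h k) = false :=
  (Finset.mem_filter.mp (Finset.orderIsoOfFin _ h k).2).2

theorem zpos_inj {N n : ℕ} {w : Fin N → Bool}
    (h : (Finset.univ.filter fun i => w i = false).card = n) {k k' : Fin n}
    (e : zpos n w h k = zpos n w h k') : k = k' :=
  (Finset.orderIsoOfFin _ h).injective (Subtype.ext e)

theorem zpos_surj {N n : ℕ} {w : Fin N → Bool}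
    (h : (Finset.univ.filter fun i => w i = false).card = n) (z : Fin N) (hz : w z = false) :
    ∃ k, zpos n w h k = z := by
  have hzmem : z ∈ Finset.univ.filter (fun i => w i = false) :=
    Finset.mem_filter.mpr ⟨Finset.mem_univ z, hz⟩
  obtain ⟨k, hk⟩ := (Finset.orderIsoOfFin _ h).surjective ⟨z, hzmem⟩
  exact ⟨k, congrArg Subtype.val hk⟩

theorem memB_rot_z (m n : ℕ) (hn : 0 < n) {w : Fin ((m + 1) * n) → Bool} (hw : memB m n w)
    (z : Fin ((m + 1) * n)) (hz : w z = false) : memB m n (rot (z : ℕ) w) := by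
  obtain ⟨h1, h2, h3, h4⟩ := hw
  obtain ⟨c1, c2, c4⟩ := memB_rot_inv m n hn h1 h2 h4 (z : ℕ)
  refine ⟨c1, c2, ?_, c4⟩
  intro i hi
  have he : rot (z : ℕ) w i = w z := by
    unfold rot
    congr 1
    exact Fin.ext (by simp only []; rw [hi, Nat.zero_add, Nat.mod_eq_of_lt z.isLt])
  rw [he]
  exact hz


/-- `n · |B^L_{m,n}| = |B_{m,n}|`, where `B^L_{m,n}` is the set of Lyndon words
in `B_{m,n}`. -/
theorem n_mul_card_lyndon (m n : ℕ) (hm : 0 < m) (hn : 0 < n) :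
    n * Nat.card {w : Fin ((m + 1) * n) → Bool // memB m n w ∧ isLyndon w} =
      Nat.card {w : Fin ((m + 1) * n) → Bool // memB m n w} := by

  classical
  have hNpos : 0 < (m + 1) * n := by positivity
  let f : {w : Fin ((m + 1) * n) → Bool // memB m n w ∧ isLyndon w} × Fin n →
      {w : Fin ((m + 1) * n) → Bool // memB m n w} := fun p =>
    ⟨rot ((zpos n p.1.1 p.1.2.1.2.1 p.2 : Fin ((m + 1) * n)) : ℕ) p.1.1,
      memB_rot_z m n hn p.1.2.1 _ (zpos_false p.1.2.1.2.1 p.2)⟩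
  have hinj : Function.Injective f := by
    rintro ⟨⟨wp, hpB, hpL⟩, kp⟩ ⟨⟨wq, hqB, hqL⟩, kq⟩ h
    have hval : rot ((zpos n wp hpB.2.1 kp : Fin ((m + 1) * n)) : ℕ) wp
        = rot ((zpos n wq hqB.2.1 kq : Fin ((m + 1) * n)) : ℕ) wq := congrArg Subtype.val h
    set zp := ((zpos n wp hpB.2.1 kp : Fin ((m + 1) * n)) : ℕ) with hzp
    set zq := ((zpos n wq hqB.2.1 kq : Fin ((m + 1) * n)) : ℕ) with hzq
    have hzplt : zp < (m + 1) * n := (zpos n wp hpB.2.1 kp).isLt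
    have hzqlt : zq < (m + 1) * n := (zpos n wq hqB.2.1 kq).isLt
    have e1 : rot (((m + 1) * n - zq) + zq) wq = wq := by
      rw [show (m + 1) * n - zq + zq = (m + 1) * n by omega, rot_self]
    have hq_of : wq = rot (((m + 1) * n - zq) + zp) wp := by
      rw [← rot_rot, hval, rot_rot, e1]
    have hww : wq = wp := lyndon_unique m n hm hn wp wq hpL hqL _ hq_of
    subst hww
    have hper : rot (((m + 1) * n - zq) + zp) wq = wq := hq_of.symm
    have hmod := aperiodic_aux m n hm hn rfl wq hqB.1 hqB.2.1 hqB.2.2.2 _ hper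
    have hdvd := Nat.dvd_of_mod_eq_zero hmod
    obtain ⟨q2, hq2⟩ := hdvd
    have hzz : zp = zq := by
      have hub : ((m + 1) * n) * q2 < ((m + 1) * n) * 2 := by omega
      have hq2lt : q2 < 2 := Nat.lt_of_mul_lt_mul_left hub
      interval_cases q2 <;> omega
    have hkk : kp = kq := by
      apply zpos_inj hqB.2.1
      exact Fin.ext hzz
    rw [hkk]
  have hsurj : Function.Surjective f := by
    rintro ⟨v, hv⟩
    obtain ⟨j0, hLyn, hmin⟩ := exists_lyndon_rot m n hm hn v hv.1 hv.2.1 hv.2.2.2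
    set w := rot j0 v with hwdef
    obtain ⟨c1, c2, c4⟩ := memB_rot_inv m n hn hv.1 hv.2.1 hv.2.2.2 j0
    set a := j0 % ((m + 1) * n) with ha
    have halt : a < (m + 1) * n := Nat.mod_lt _ hNpos
    set z0 := ((m + 1) * n - a) % ((m + 1) * n) with hz0
    have hz0lt : z0 < (m + 1) * n := Nat.mod_lt _ hNpos
    have hsum : (z0 + j0) % ((m + 1) * n) = 0 := by
      rw [Nat.add_mod, Nat.mod_eq_of_lt hz0lt, ← ha]
      rcases Nat.eq_zero_or_pos a with h0 | h0
      · have hz00 : z0 = 0 := by rw [hz0, h0, Nat.sub_zero, Nat.mod_self]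
        rw [hz00, h0]
        simp
      · have hz00 : z0 = (m + 1) * n - a := by rw [hz0]; exact Nat.mod_eq_of_lt (by omega)
        rw [hz00, show (m + 1) * n - a + a = (m + 1) * n by omega, Nat.mod_self]
    have hvw : v = rot z0 w := by
      have : rot z0 w = v := by
        calc rot z0 w = rot (z0 + j0) v := by rw [hwdef, rot_rot]
          _ = rot ((z0 + j0) % ((m + 1) * n)) v := (rot_mod _ _).symm
          _ = rot 0 v := by rw [hsum]
          _ = v := rot_zero v
      exact this.symm
    have hv0 : v ⟨0, hNpos⟩ = false := hv.2.2.1 _ rfl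
    have hwz : w ⟨z0, hz0lt⟩ = false := by
      have := congrFun hvw ⟨0, hNpos⟩
      rw [hv0] at this
      have e2 : rot z0 w ⟨0, hNpos⟩ = w ⟨z0, hz0lt⟩ := by
        unfold rot
        congr 1
        exact Fin.ext (by simp only []; rw [Nat.zero_add, Nat.mod_eq_of_lt hz0lt])
      rw [e2] at this
      exact this.symm
    have hw0 : ∀ i : Fin ((m + 1) * n), (i : ℕ) = 0 → w i = false := by
      intro i hi
      by_contra hT
      have hwT : w i = true := by
        cases hwi : w i
        · exact absurd hwi hT
        · rfl
      have hieq : i = ⟨0, hNpos⟩ := Fin.ext hi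
      have hlt : toLex v < toLex w := by
        refine ⟨i, ?_, ?_⟩
        · intro i' hi'
          have hlt' : (i' : ℕ) < (i : ℕ) := hi'
          rw [hi] at hlt'
          exact absurd hlt' (Nat.not_lt_zero _)
        · rw [hieq] at hwT ⊢
          show v ⟨0, hNpos⟩ < w ⟨0, hNpos⟩
          rw [hwT, hv0]
          decide
      have hle : toLex w ≤ toLex v := by
        have := hmin 0
        rw [rot_zero] at this
        exact this
      exact absurd hlt (not_lt.mpr hle)
    have hwmem : memB m n w := ⟨c1, c2, hw0, c4⟩
    obtain ⟨k, hk⟩ := zpos_surj hwmem.2.1 ⟨z0, hz0lt⟩ hwz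
    refine ⟨(⟨w, hwmem, hLyn⟩, k), ?_⟩
    apply Subtype.ext
    show rot ((zpos n w hwmem.2.1 k : Fin ((m + 1) * n)) : ℕ) w = v
    rw [hk]
    exact hvw.symm
  have E : ({w : Fin ((m + 1) * n) → Bool // memB m n w ∧ isLyndon w} × Fin n)
      ≃ {w : Fin ((m + 1) * n) → Bool // memB m n w} := Equiv.ofBijective f ⟨hinj, hsurj⟩
  calc n * Nat.card {w : Fin ((m + 1) * n) → Bool // memB m n w ∧ isLyndon w}
      = Nat.card ({w : Fin ((m + 1) * n) → Bool // memB m n w ∧ isLyndon w} × Fin n) := by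
        rw [Nat.card_prod, Nat.card_eq_fintype_card (α := Fin n), Fintype.card_fin, mul_comm]
    _ = Nat.card {w : Fin ((m + 1) * n) → Bool // memB m n w} := Nat.card_congr E
end
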